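/- For positive integers m, with k = 2 terms in Stirling's expansion: binom(2m, m) = (4^m/sqrt(π·m))·exp(-1/(8m) + θ/(180·m³)) for some θ with |θ| < 1. -/

import Mathlib

open Stirling Real Filter Topology

lemma c_ub (n : ℕ) :
    Real.log (stirlingSeq (n + 1)) - Real.log (stirlingSeq (n + 2)) <
      1 / (12 * ((n : ℝ) + 1) * ((n : ℝ) + 2)) := by
  set r : ℝ := ((1 : ℝ) / (2 * ((n : ℕ) + 1 : ℕ) + 1)) ^ 2 with hr
  have hrpos : (0 : ℝ) < r := by positivity
  have hrlt : r < 1 := by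
    rw [hr, one_div, inv_pow]
    refine inv_lt_one_of_one_lt₀ (one_lt_pow₀ ?_ two_ne_zero)
    push_cast; nlinarith [Nat.cast_nonneg (α := ℝ) n]
  have hgeo : HasSum (fun k : ℕ => (1 / 3 : ℝ) * r ^ (k + 1)) (1 / 3 * r / (1 - r)) := by
    have h := (hasSum_geometric_of_lt_one hrpos.le hrlt).mul_left ((1 / 3 : ℝ) * r)
    have he : (fun k : ℕ => (1 / 3 : ℝ) * r ^ (k + 1)) = fun k => (1 / 3 * r) * r ^ k := by
      funext k; rw [pow_succ']; ring
    rw [he]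
    simpa [div_eq_mul_inv] using h
  have hle : ∀ k : ℕ, (1 : ℝ) / (2 * ↑(k + 1) + 1) * r ^ (k + 1) ≤ 1 / 3 * r ^ (k + 1) := by
    intro k
    have : (1 : ℝ) / (2 * ↑(k + 1) + 1) ≤ 1 / 3 := by
      apply one_div_le_one_div_of_le (by norm_num)
      push_cast; nlinarith [Nat.cast_nonneg (α := ℝ) k]
    exact mul_le_mul_of_nonneg_right this (by positivity)
  have hi : (1 : ℝ) / (2 * ((1 + 1 : ℕ) : ℝ) + 1) * r ^ (1 + 1) < 1 / 3 * r ^ (1 + 1) := by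
    have hp : (0 : ℝ) < r ^ (1 + 1) := by positivity
    push_cast; nlinarith
  have hlt := hasSum_lt hle hi (log_stirlingSeq_diff_hasSum n) hgeo
  refine hlt.trans_le (le_of_eq ?_)
  have h2 : (0 : ℝ) < 1 - r := by linarith
  rw [hr] at h2 ⊢
  push_cast at h2 ⊢
  have h4 : (2 * ((n : ℝ) + 1) + 1) ≠ 0 := by positivity
  have hD : (216 + (n:ℝ) * 612 + (n:ℝ) ^ 2 * 636 + (n:ℝ) ^ 3 * 288 + (n:ℝ) ^ 4 * 48) ≠ 0 := by
    positivity
  field_simp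
  have hE : (2 * ((n : ℝ) + 1) + 1) ^ 2 - 1 ≠ 0 := by ring_nf; positivity
  rw [div_eq_iff hE]; ring

noncomputable def ff (x : ℝ) : ℝ := 1 / (12 * x) - 1 / (360 * x ^ 3)

lemma poly_ineq (x : ℝ) (hx : 1 ≤ x) :
    ff x - ff (x + 1) <
      1 / 3 * (1 / (2 * x + 1)) ^ 2 + 1 / 5 * ((1 / (2 * x + 1)) ^ 2) ^ 2 := by
  have h1 : (0:ℝ) < x := by linarith
  have h2 : (0:ℝ) < x + 1 := by linarith
  have h3 : (0:ℝ) < 2 * x + 1 := by linarith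
  rw [← sub_pos]
  have key : 1 / 3 * (1 / (2 * x + 1)) ^ 2 + 1 / 5 * ((1 / (2 * x + 1)) ^ 2) ^ 2
      - (ff x - ff (x + 1)) =
      (10 * x ^ 4 + 20 * x ^ 3 + 21 * x ^ 2 + 11 * x + 1) /
        (360 * x ^ 3 * (x + 1) ^ 3 * (2 * x + 1) ^ 4) := by
    unfold ff
    field_simp
    ring
  rw [key]
  positivity

lemma c_lb (n : ℕ) :
    ff ((n : ℝ) + 1) - ff ((n : ℝ) + 2) <
      Real.log (stirlingSeq (n + 1)) - Real.log (stirlingSeq (n + 2)) := by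
  have hs := log_stirlingSeq_diff_hasSum n
  have hps := sum_le_hasSum (Finset.range 2) (fun k _ => by positivity) hs
  refine lt_of_lt_of_le ?_ hps
  have h := poly_ineq ((n : ℝ) + 1) (by nlinarith [Nat.cast_nonneg (α := ℝ) n])
  rw [show ((n : ℝ) + 2) = ((n : ℝ) + 1) + 1 by ring]
  refine h.trans_le (le_of_eq ?_)
  rw [Finset.sum_range_succ, Finset.sum_range_one]
  push_cast
  norm_num

noncomputable def dd (n : ℕ) : ℝ := Real.log (stirlingSeq n) - Real.log (Real.sqrt Real.pi)

lemma dd_tendsto : Tendsto (fun n : ℕ => dd (n + 1)) atTop (𝓝 0) := by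
  have hsp : (0:ℝ) < Real.sqrt Real.pi := Real.sqrt_pos.mpr Real.pi_pos
  have h1 : Tendsto (fun n : ℕ => Real.log (stirlingSeq n)) atTop
      (𝓝 (Real.log (Real.sqrt Real.pi))) :=
    (Real.continuousAt_log hsp.ne').tendsto.comp tendsto_stirlingSeq_sqrt_pi
  have h2 : Tendsto dd atTop (𝓝 0) := by
    have := h1.sub (tendsto_const_nhds (x := Real.log (Real.sqrt Real.pi)) (f := atTop))
    rw [sub_self] at this; exact this
  exact h2.comp (tendsto_add_atTop_nat 1)

lemma cast_succ_tendsto : Tendsto (fun n : ℕ => ((n : ℝ) + 1)) atTop atTop :=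
  tendsto_atTop_add_const_right atTop 1 tendsto_natCast_atTop_atTop

lemma ff_tendsto : Tendsto (fun n : ℕ => ff ((n : ℝ) + 1)) atTop (𝓝 0) := by
  have t1 : Tendsto (fun x : ℝ => 1 / (12 * x)) atTop (𝓝 0) :=
    tendsto_const_nhds.div_atTop (tendsto_id.const_mul_atTop (by norm_num))
  have t2 : Tendsto (fun x : ℝ => 1 / (360 * x ^ 3)) atTop (𝓝 0) :=
    tendsto_const_nhds.div_atTop ((tendsto_pow_atTop (three_ne_zero)).const_mul_atTop (by norm_num))
  have := (t1.sub t2).comp cast_succ_tendsto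
  simpa [ff, Function.comp_def] using this

lemma gg_tendsto : Tendsto (fun n : ℕ => 1 / (12 * ((n : ℝ) + 1))) atTop (𝓝 0) := by
  have t1 : Tendsto (fun x : ℝ => 1 / (12 * x)) atTop (𝓝 0) :=
    tendsto_const_nhds.div_atTop (tendsto_id.const_mul_atTop (by norm_num))
  simpa [Function.comp_def] using t1.comp cast_succ_tendsto

lemma pos_of_strictAnti_tendsto {A : ℕ → ℝ} (h : ∀ n, A (n + 1) < A n)
    (h0 : Tendsto A atTop (𝓝 0)) (n : ℕ) : 0 < A n := by
  have hanti : Antitone A := antitone_nat_of_succ_le fun n => (h n).le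
  exact lt_of_le_of_lt (hanti.le_of_tendsto h0 (n + 1)) (h n)

lemma dd_lt (n : ℕ) : dd (n + 1) < 1 / (12 * ((n : ℝ) + 1)) := by
  have key := pos_of_strictAnti_tendsto
    (A := fun n : ℕ => 1 / (12 * ((n : ℝ) + 1)) - dd (n + 1)) ?_ ?_ n
  · linarith
  · intro k
    have hc := c_ub k
    have heq : (1:ℝ) / (12 * ((k : ℝ) + 1)) - 1 / (12 * ((k : ℝ) + 1 + 1)) =
        1 / (12 * ((k : ℝ) + 1) * ((k : ℝ) + 2)) := by
      have h1 : ((k:ℝ) + 1) ≠ 0 := by positivity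
      have h2 : ((k:ℝ) + 2) ≠ 0 := by positivity
      field_simp
      ring
    have : dd (k + 1) - dd (k + 1 + 1) =
        Real.log (stirlingSeq (k + 1)) - Real.log (stirlingSeq (k + 2)) := by
      simp [dd]
    push_cast
    linarith [hc, heq, this]
  · simpa using gg_tendsto.sub dd_tendsto

lemma lt_dd (n : ℕ) : ff ((n : ℝ) + 1) < dd (n + 1) := by
  have key := pos_of_strictAnti_tendsto
    (A := fun n : ℕ => dd (n + 1) - ff ((n : ℝ) + 1)) ?_ ?_ n
  · linarith
  · intro k
    have hc := c_lb k
    have : dd (k + 1) - dd (k + 1 + 1) =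
        Real.log (stirlingSeq (k + 1)) - Real.log (stirlingSeq (k + 2)) := by
      simp [dd]
    rw [show ((k:ℝ) + 2) = (k:ℝ) + 1 + 1 from by ring] at hc
    push_cast
    linarith [hc, this]
  · simpa using dd_tendsto.sub ff_tendsto

lemma choose_eq (m : ℕ) (hm : 0 < m) :
    (Nat.choose (2 * m) m : ℝ) =
      4 ^ m / Real.sqrt (Real.pi * m) * Real.exp (dd (2 * m) - 2 * dd m) := by
  have hm' : (0:ℝ) < m := by exact_mod_cast hm
  have hsp : (0:ℝ) < Real.sqrt Real.pi := Real.sqrt_pos.mpr Real.pi_pos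
  have hsm : (0:ℝ) < Real.sqrt m := Real.sqrt_pos.mpr hm'
  have hs1 : 0 < stirlingSeq m := by
    rw [stirlingSeq]
    apply div_pos (by exact_mod_cast m.factorial_pos)
    apply mul_pos (Real.sqrt_pos.mpr (by positivity))
    exact pow_pos (by positivity) m
  have hs2 : 0 < stirlingSeq (2 * m) := by
    rw [stirlingSeq]
    apply div_pos (by exact_mod_cast (2 * m).factorial_pos)
    apply mul_pos (Real.sqrt_pos.mpr (by push_cast; positivity))
    exact pow_pos (by push_cast; positivity) (2 * m)
  have hexp : Real.exp (dd (2 * m) - 2 * dd m) =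
      stirlingSeq (2 * m) * Real.sqrt Real.pi / stirlingSeq m ^ 2 := by
    have h : dd (2 * m) - 2 * dd m =
        Real.log (stirlingSeq (2 * m) * Real.sqrt Real.pi / stirlingSeq m ^ 2) := by
      rw [Real.log_div (by positivity) (by positivity), Real.log_mul hs2.ne' hsp.ne',
        Real.log_pow]
      unfold dd; push_cast; ring
    rw [h, Real.exp_log (by positivity)]
  have hfac : ((2 * m).factorial : ℝ) =
      (Nat.choose (2 * m) m : ℝ) * m.factorial * m.factorial := by
    have h := Nat.choose_mul_factorial_mul_factorial (show m ≤ 2 * m by omega)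
    rw [show 2 * m - m = m by omega] at h
    exact_mod_cast h.symm
  have hkey : (Nat.choose (2 * m) m : ℝ) * stirlingSeq m ^ 2 * Real.sqrt m =
      stirlingSeq (2 * m) * 4 ^ m := by
    rw [stirlingSeq, stirlingSeq, hfac]
    have e1 : Real.sqrt (2 * ((2 * m : ℕ) : ℝ)) = 2 * Real.sqrt m := by
      push_cast
      rw [show (2 : ℝ) * (2 * (m : ℝ)) = 4 * m by ring, Real.sqrt_mul (by norm_num) (m : ℝ),
        show Real.sqrt 4 = 2 by
          rw [show (4:ℝ) = 2 ^ 2 by norm_num, Real.sqrt_sq (by norm_num)]]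
    have e2 : (((2 * m : ℕ) : ℝ) / Real.exp 1) ^ (2 * m) =
        4 ^ m * ((m : ℝ) / Real.exp 1) ^ (2 * m) := by
      push_cast
      rw [show (2 : ℝ) * (m : ℝ) / Real.exp 1 = 2 * ((m : ℝ) / Real.exp 1) by ring,
        mul_pow, show ((2:ℝ)) ^ (2 * m) = 4 ^ m by rw [pow_mul]; norm_num]
    rw [e1, e2]
    have hpow : (0:ℝ) < ((m : ℝ) / Real.exp 1) ^ m := pow_pos (by positivity) m
    have hsq : Real.sqrt (2 * (m:ℝ)) ^ 2 = 2 * (m:ℝ) := Real.sq_sqrt (by positivity)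
    have hmm : Real.sqrt (m:ℝ) * Real.sqrt (m:ℝ) = (m:ℝ) := Real.mul_self_sqrt hm'.le
    have hppow : ((m : ℝ) / Real.exp 1) ^ (2 * m) =
        (((m : ℝ) / Real.exp 1) ^ m) ^ 2 := by rw [← pow_mul, mul_comm]
    have hs2m : (0:ℝ) < Real.sqrt (2 * (m:ℝ)) := Real.sqrt_pos.mpr (by positivity)
    have hsq2 : Real.sqrt (2 * (m:ℝ)) ^ 2 = 2 * (Real.sqrt (m:ℝ) * Real.sqrt (m:ℝ)) := by
      rw [hsq, hmm]
    rw [div_pow, mul_pow, hsq2, hppow]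
    field_simp
  rw [hexp, Real.sqrt_mul Real.pi_pos.le]
  rw [div_mul_div_comm, eq_div_iff (by positivity)]
  nlinarith [hkey, hsp, hsm, hs1, hs2]

theorem stmt_19 (m : ℕ) (hm : 0 < m) :
    ∃ θ : ℝ, |θ| < 1 ∧
      (Nat.choose (2 * m) m : ℝ) =
        (4 ^ m / Real.sqrt (Real.pi * m)) *
          Real.exp (-1 / (8 * m) + θ / (180 * (m : ℝ) ^ 3)) := by
  obtain ⟨k, rfl⟩ : ∃ k, m = k + 1 := ⟨m - 1, by omega⟩
  set x : ℝ := (k : ℝ) + 1 with hxdef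
  have hx : (1:ℝ) ≤ x := by simp [hxdef]
  have hx0 : (0:ℝ) < x := by linarith
  have hcast : ((k + 1 : ℕ) : ℝ) = x := by push_cast; rfl
  set P : ℝ := dd (2 * (k + 1)) with hP
  set Q : ℝ := dd (k + 1) with hQ
  -- bounds on Q
  have u1 : Q < 1 / (12 * x) := dd_lt k
  have u2 : 1 / (12 * x) - 1 / (360 * x ^ 3) < Q := by
    have := lt_dd k
    rw [ff] at this
    exact this
  -- bounds on P
  have hidx : 2 * (k + 1) = (2 * k + 1) + 1 := by ring
  have u3 : P < 1 / (24 * x) := by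
    have h := dd_lt (2 * k + 1)
    rw [← hidx] at h
    refine (hP ▸ h).trans_le (le_of_eq ?_)
    rw [show 12 * ((↑(2 * k + 1) : ℝ) + 1) = 24 * x by push_cast [hxdef]; ring]
  have u4 : 1 / (24 * x) - 1 / (2880 * x ^ 3) < P := by
    have h := lt_dd (2 * k + 1)
    rw [← hidx] at h
    refine lt_of_le_of_lt (le_of_eq ?_) (hP ▸ h)
    rw [ff, show ((↑(2 * k + 1) : ℝ) + 1) = 2 * x by push_cast [hxdef]; ring]
    have hxne : x ≠ 0 := hx0.ne'
    field_simp
    ring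
  -- the error term
  have h5 : P - 2 * Q + 1 / (8 * x) < 1 / (180 * x ^ 3) := by
    have e : 1 / (24 * x) - 2 * (1 / (12 * x) - 1 / (360 * x ^ 3)) + 1 / (8 * x) =
        1 / (180 * x ^ 3) := by field_simp; ring
    linarith
  have h6 : -(1 / (180 * x ^ 3)) < P - 2 * Q + 1 / (8 * x) := by
    have e : 1 / (24 * x) - 1 / (2880 * x ^ 3) - 2 * (1 / (12 * x)) + 1 / (8 * x) =
        -(1 / (2880 * x ^ 3)) := by field_simp; ring
    have e2 : 1 / (2880 * x ^ 3) < 1 / (180 * x ^ 3) := by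
      apply one_div_lt_one_div_of_lt (by positivity)
      nlinarith [pow_pos hx0 3]
    linarith
  refine ⟨180 * x ^ 3 * (P - 2 * Q + 1 / (8 * x)), ?_, ?_⟩
  · rw [abs_lt]
    have hpos : (0:ℝ) < 180 * x ^ 3 := by positivity
    constructor
    · have := mul_lt_mul_of_pos_left h6 hpos
      rw [mul_neg, mul_one_div, div_self hpos.ne'] at this
      linarith
    · have := mul_lt_mul_of_pos_left h5 hpos
      rw [mul_one_div, div_self hpos.ne'] at this
      linarith
  · have harg : -1 / (8 * ((k + 1 : ℕ) : ℝ)) +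
        (180 * x ^ 3 * (P - 2 * Q + 1 / (8 * x))) / (180 * ((k + 1 : ℕ) : ℝ) ^ 3) =
        P - 2 * Q := by
      rw [hcast]
      field_simp
      ring
    rw [harg]
    exact choose_eq (k + 1) (by omega)
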